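/- Let γ > 0 and let C₃ be a real number with C₃ ≤ γ, and let g(y) = γ/(1−y) − C₃y. Then g is strictly increasing on [0,1). Consequently, for each real C₂ there is at most one y ∈ (0,1) with (C₂−γ)y + (C₃−C₂)y² − C₃y³ = 0, i.e., the cubic model has at most one endemic equilibrium. -/
import Mathlib


/-- If `γ > 0` and `C₃ ≤ γ`, then `g(y) = γ/(1−y) − C₃y` is strictly
increasing on `[0,1)`; consequently for each `C₂` the cubic contagion model
`f(y) = (C₂−γ)y + (C₃−C₂)y² − C₃y³` has at most one endemic equilibrium in `(0,1)`. -/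
theorem cubic_at_most_one_endemic (γ C₃ : ℝ) (hγ : 0 < γ) (hC₃ : C₃ ≤ γ) (g : ℝ → ℝ)
    (hg : ∀ y : ℝ, g y = γ / (1 - y) - C₃ * y) :
    StrictMonoOn g (Set.Ico (0 : ℝ) 1) ∧
    ∀ C₂ : ℝ, ∀ y ∈ Set.Ioo (0 : ℝ) 1, ∀ y' ∈ Set.Ioo (0 : ℝ) 1,
      (C₂ - γ) * y + (C₃ - C₂) * y ^ 2 - C₃ * y ^ 3 = 0 →
      (C₂ - γ) * y' + (C₃ - C₂) * y' ^ 2 - C₃ * y' ^ 3 = 0 →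
      y = y' := by
  have hmono : StrictMonoOn g (Set.Ico (0 : ℝ) 1) := by
    rintro a ⟨ha0, ha1⟩ b ⟨hb0, hb1⟩ hab
    have h1a : (0:ℝ) < 1 - a := by linarith
    have h1b : (0:ℝ) < 1 - b := by linarith
    rw [hg, hg]
    have hdiff : γ / (1 - b) - γ / (1 - a) = γ * (b - a) / ((1 - a) * (1 - b)) := by
      field_simp; ring
    have hprod : (1 - a) * (1 - b) < 1 := by nlinarith
    have hprodpos : (0:ℝ) < (1 - a) * (1 - b) := mul_pos h1a h1b
    have key : γ * (b - a) / ((1 - a) * (1 - b)) > C₃ * (b - a) := by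
      rw [gt_iff_lt, lt_div_iff₀ hprodpos]
      have hprodC : C₃ * ((1 - a) * (1 - b)) < γ := by
        rcases le_or_gt C₃ 0 with h | h
        · nlinarith
        · nlinarith
      nlinarith [mul_lt_mul_of_pos_right hprodC (show (0:ℝ) < b - a by linarith)]
    nlinarith [key, hdiff]
  refine ⟨hmono, ?_⟩
  intro C₂ y hy y' hy' hf hf'
  obtain ⟨hy0, hy1⟩ := hy
  obtain ⟨hy0', hy1'⟩ := hy'
  have key : ∀ z : ℝ, 0 < z → z < 1 →
      (C₂ - γ) * z + (C₃ - C₂) * z ^ 2 - C₃ * z ^ 3 = 0 → g z = C₂ := by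
    intro z hz0 hz1 hfz
    have h1z : (0:ℝ) < 1 - z := by linarith
    rw [hg]
    have : z * (1 - z) * (C₂ - (γ / (1 - z) - C₃ * z)) =
        (C₂ - γ) * z + (C₃ - C₂) * z ^ 2 - C₃ * z ^ 3 := by
      field_simp; ring
    have hz : z * (1 - z) * (C₂ - (γ / (1 - z) - C₃ * z)) = 0 := by rw [this, hfz]
    have hne : z * (1 - z) ≠ 0 := by positivity
    have := mul_eq_zero.mp hz
    rcases this with h | h
    · exact absurd h hne
    · linarith
  have e1 : g y = C₂ := key y hy0 hy1 hf
  have e2 : g y' = C₂ := key y' hy0' hy1' hf'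
  exact hmono.injOn ⟨le_of_lt hy0, hy1⟩ ⟨le_of_lt hy0', hy1'⟩ (e1.trans e2.symm)
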